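/- Let m ≥ 1 and k ≥ 1 be integers and let v : Finset (Fin m) → ℝ be a matroid rank sum (MRS) function. Then the function x ↦ G_k^v(x) (defined by the lottery formula, which is a polynomial in x) is concave on the polytope P_k: ConcaveOn ℝ P_k G_k^v. (The k-bounded-lottery rounding scheme is convex for combinatorial public projects with MRS valuations.) -/

import Mathlib

open Finset

/-- Per-draw weights: project `j` is drawn with probability `x j / k`, and
`none` (no project) with the remaining probability `1 - (∑ j, x j)/k`. -/
noncomputable def lotW {m : ℕ} (k : ℕ) (x : Fin m → ℝ) : Option (Fin m) → ℝ
  | some j => x j / k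
  | none => 1 - (∑ j, x j) / k

/-- Probability of a particular draw function `f : Fin t → Option (Fin m)`,
with per-draw weights determined by `k` and `x`. -/
noncomputable def lotP {m : ℕ} (k t : ℕ) (x : Fin m → ℝ)
    (f : Fin t → Option (Fin m)) : ℝ :=
  ∏ s, lotW k x (f s)

/-- The set of projects chosen by a draw function `f`. -/
def lotProj {m t : ℕ} (f : Fin t → Option (Fin m)) : Finset (Fin m) :=
  Finset.univ.filter (fun j => ∃ s, f s = some j)


/-- Expected value of the set function `v` under the `k`-bounded-lottery
rounding scheme `r_k` applied to `x`. -/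
noncomputable def lotG {m : ℕ} (k : ℕ) (v : Finset (Fin m) → ℝ)
    (x : Fin m → ℝ) : ℝ :=
  ∑ f : Fin k → Option (Fin m), lotP k k x f * v (lotProj f)

open Classical in
/-- The rank of the finite set `S` in the matroid `M`: the maximum cardinality
of an independent subset of `S`. -/
noncomputable def matFinRank {m : ℕ} (M : Matroid (Fin m)) (S : Finset (Fin m)) : ℕ :=
  (S.powerset.filter
    (fun I : Finset (Fin m) => M.Indep (↑I : Set (Fin m)))).sup Finset.card

/-- `v` is a matroid rank sum (MRS) function: a nonnegative weighted sum of
rank functions of matroids on `Fin m` with full ground set. -/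
def IsMRS {m : ℕ} (v : Finset (Fin m) → ℝ) : Prop :=
  ∃ (κ : ℕ) (M : Fin κ → Matroid (Fin m)) (w : Fin κ → ℝ),
    (∀ ℓ, (M ℓ).E = Set.univ) ∧ (∀ ℓ, 0 ≤ w ℓ) ∧
    ∀ S : Finset (Fin m), v S = ∑ ℓ, w ℓ * (matFinRank (M ℓ) S : ℝ)

namespace MRS
variable {m : ℕ} {M : Matroid (Fin m)}

lemma le_rank {J S : Finset (Fin m)} (hJ : M.Indep (↑J : Set (Fin m))) (hJS : J ⊆ S) :
    J.card ≤ matFinRank M S := by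
  classical
  refine Finset.le_sup ?_
  simp only [matFinRank, Finset.mem_filter, Finset.mem_powerset]
  exact ⟨hJS, hJ⟩

lemma rank_spec (M : Matroid (Fin m)) (S : Finset (Fin m)) :
    ∃ I : Finset (Fin m), I ⊆ S ∧ M.Indep (↑I : Set (Fin m)) ∧ I.card = matFinRank M S := by
  classical
  have hne : (S.powerset.filter
      (fun I : Finset (Fin m) => M.Indep (↑I : Set (Fin m)))).Nonempty := by
    refine ⟨∅, ?_⟩
    simp [Finset.mem_filter, M.empty_indep]
  obtain ⟨I, hI, hsup⟩ := Finset.exists_mem_eq_sup _ hne Finset.card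
  simp only [Finset.mem_filter, Finset.mem_powerset] at hI
  exact ⟨I, hI.1, hI.2, by rw [matFinRank]; convert hsup.symm⟩

lemma rank_mono {S T : Finset (Fin m)} (h : S ⊆ T) : matFinRank M S ≤ matFinRank M T := by
  classical
  apply Finset.sup_mono
  intro I hI
  simp only [Finset.mem_filter, Finset.mem_powerset] at hI ⊢
  exact ⟨hI.1.trans h, hI.2⟩

lemma rank_eq_basis {I : Set (Fin m)} {S : Finset (Fin m)} (hI : M.IsBasis I (↑S : Set (Fin m))) :
    (Set.toFinite I).toFinset.card = matFinRank M S := by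
  refine le_antisymm ?_ ?_
  · refine le_rank ?_ ?_
    · rw [Set.Finite.coe_toFinset]; exact hI.indep
    · intro x hx
      have : x ∈ I := (Set.Finite.mem_toFinset _).mp hx
      exact_mod_cast hI.subset this
  · obtain ⟨J, hJS, hJind, hJcard⟩ := rank_spec M S
    obtain ⟨I', hI'basis, hJI'⟩ := hJind.subset_isBasis_of_subset
      (show (↑J : Set (Fin m)) ⊆ ↑S from Finset.coe_subset.mpr hJS) hI.subset_ground
    have hcard : I'.encard = I.encard := hI'basis.encard_eq_encard hI
    have h1 : (J.card : ℕ∞) ≤ I.encard := by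
      rw [← hcard, ← Set.encard_coe_eq_coe_finsetCard]
      exact Set.encard_mono hJI'
    rw [Set.Finite.encard_eq_coe_toFinset_card] at h1
    rw [← hJcard]
    exact_mod_cast h1

lemma rank_insert_le (a : Fin m) (S : Finset (Fin m)) :
    matFinRank M (insert a S) ≤ matFinRank M S + 1 := by
  classical
  apply Finset.sup_le
  intro I hI
  simp only [Finset.mem_filter, Finset.mem_powerset] at hI
  obtain ⟨hIsub, hIind⟩ := hI
  by_cases ha : a ∈ I
  · have h1 : (I.erase a).card + 1 = I.card := Finset.card_erase_add_one ha
    have h2 : (I.erase a).card ≤ matFinRank M S := by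
      refine le_rank (hIind.subset ?_) ?_
      · exact_mod_cast Finset.erase_subset a I
      · intro x hx
        have hxI := Finset.mem_of_mem_erase hx
        have hxa := Finset.ne_of_mem_erase hx
        rcases Finset.mem_insert.mp (hIsub hxI) with h | h
        · exact absurd h hxa
        · exact h
    omega
  · have : I ⊆ S := fun x hx => by
      rcases Finset.mem_insert.mp (hIsub hx) with h | h
      · exact absurd (h ▸ hx) ha
      · exact h
    exact (le_rank hIind this).trans (Nat.le_succ _)

lemma rank_le_insert (a : Fin m) (S : Finset (Fin m)) :
    matFinRank M S ≤ matFinRank M (insert a S) :=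
  rank_mono (Finset.subset_insert a S)

lemma mem_closure_of_rank_insert (hE : M.E = Set.univ) {a : Fin m} {S : Finset (Fin m)}
    (h : matFinRank M (insert a S) ≤ matFinRank M S) : a ∈ M.closure (↑S : Set (Fin m)) := by
  obtain ⟨I, hI⟩ := M.exists_isBasis (↑S : Set (Fin m)) (by rw [hE]; exact Set.subset_univ _)
  by_contra ha
  have haI : a ∉ I := fun haI => ha (M.subset_closure (↑S) hI.subset_ground (hI.subset haI))
  have haE : a ∈ M.E := by rw [hE]; trivial
  have hacl : a ∉ M.closure I := by rw [hI.closure_eq_closure]; exact ha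
  have hind : M.Indep (insert a I) := by
    rw [hI.indep.insert_indep_iff]
    exact Or.inl ⟨haE, hacl⟩
  set Ifin := (Set.toFinite I).toFinset with hIfin
  have hIr : Ifin.card = matFinRank M S := rank_eq_basis hI
  have hcoe : (↑(insert a Ifin) : Set (Fin m)) = insert a I := by
    rw [Finset.coe_insert, Set.Finite.coe_toFinset]
  have hsub : insert a Ifin ⊆ insert a S := by
    intro x hx
    rcases Finset.mem_insert.mp hx with h | h
    · exact Finset.mem_insert.mpr (Or.inl h)
    · exact Finset.mem_insert.mpr (Or.inr (by
        have : x ∈ I := (Set.Finite.mem_toFinset _).mp h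
        exact_mod_cast hI.subset this))
  have hle : (insert a Ifin).card ≤ matFinRank M (insert a S) :=
    le_rank (by rw [hcoe]; exact hind) hsub
  have hcard : (insert a Ifin).card = Ifin.card + 1 := by
    rw [Finset.card_insert_of_notMem (fun hmem => haI ((Set.Finite.mem_toFinset _).mp hmem))]
  omega

lemma rank_insert_of_mem_closure (hE : M.E = Set.univ) {a : Fin m} {S : Finset (Fin m)}
    (ha : a ∈ M.closure (↑S : Set (Fin m))) :
    matFinRank M (insert a S) = matFinRank M S := by
  obtain ⟨I, hI⟩ := M.exists_isBasis (↑S : Set (Fin m)) (by rw [hE]; exact Set.subset_univ _)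
  have hbasis : M.IsBasis I (↑(insert a S) : Set (Fin m)) := by
    rw [Finset.coe_insert]
    refine hI.indep.isBasis_of_subset_of_subset_closure
      (hI.subset.trans (Set.subset_insert _ _)) ?_
    rw [hI.closure_eq_closure]
    exact Set.insert_subset ha (M.subset_closure _ hI.subset_ground)
  rw [← rank_eq_basis hI, ← rank_eq_basis hbasis]

lemma rank_insert_eq_of_superset (hE : M.E = Set.univ) {a : Fin m} {A B : Finset (Fin m)}
    (hAB : A ⊆ B) (h : matFinRank M (insert a A) ≤ matFinRank M A) :
    matFinRank M (insert a B) = matFinRank M B :=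
  rank_insert_of_mem_closure hE
    (M.closure_subset_closure (Finset.coe_subset.mpr hAB) (mem_closure_of_rank_insert hE h))

end MRS

namespace MRS
variable {m : ℕ} {M : Matroid (Fin m)}

def optSet {m : ℕ} : Option (Fin m) → Finset (Fin m)
  | some j => {j}
  | none => ∅

lemma rank_optUnion_le (o : Option (Fin m)) (X : Finset (Fin m)) :
    matFinRank M (optSet o ∪ X) ≤ matFinRank M X + 1 := by
  cases o with
  | none => simp [optSet]
  | some j => rw [optSet, ← Finset.insert_eq]; exact rank_insert_le j X

lemma rank_le_optUnion (o : Option (Fin m)) (X : Finset (Fin m)) :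
    matFinRank M X ≤ matFinRank M (optSet o ∪ X) :=
  rank_mono Finset.subset_union_right

lemma rank_optUnion_flat (hE : M.E = Set.univ) {o : Option (Fin m)} {A B : Finset (Fin m)}
    (hAB : A ⊆ B) (h : matFinRank M (optSet o ∪ A) ≤ matFinRank M A) :
    matFinRank M (optSet o ∪ B) = matFinRank M B := by
  cases o with
  | none => simp [optSet]
  | some j =>
    rw [optSet, ← Finset.insert_eq] at h ⊢
    exact rank_insert_eq_of_superset hE hAB h

theorem quad_le (hE : M.E = Set.univ) (A : Finset (Fin m)) (δ : Option (Fin m) → ℝ)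
    (hδ : ∑ o, δ o = 0) :
    ∑ o, ∑ o', δ o * δ o' *
      ((matFinRank M (optSet o ∪ (optSet o' ∪ A)) : ℕ) : ℝ) ≤ 0 := by
  classical
  set r := matFinRank M A with hr
  set U : Finset (Option (Fin m)) :=
    Finset.univ.filter (fun o => matFinRank M (optSet o ∪ A) = r + 1) with hU
  set rel : Option (Fin m) → Option (Fin m) → Prop :=
    fun o o' => matFinRank M (optSet o ∪ (optSet o' ∪ A)) = r + 1 with hreldef
  have h01 : ∀ o, matFinRank M (optSet o ∪ A) = r ∨ matFinRank M (optSet o ∪ A) = r + 1 := by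
    intro o
    have h1 := rank_optUnion_le (M := M) o A
    have h2 := rank_le_optUnion (M := M) o A
    omega
  have hUmem : ∀ o, o ∈ U ↔ matFinRank M (optSet o ∪ A) = r + 1 := by
    intro o; simp [hU]
  have hUnot : ∀ o, o ∉ U → matFinRank M (optSet o ∪ A) = r := by
    intro o ho
    rcases h01 o with h | h
    · exact h
    · exact absurd ((hUmem o).mpr h) ho
  have hflat : ∀ o o', o ∉ U →
      matFinRank M (optSet o ∪ (optSet o' ∪ A)) = matFinRank M (optSet o' ∪ A) := by
    intro o o' ho
    exact rank_optUnion_flat hE Finset.subset_union_right (le_of_eq (hUnot o ho))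
  have hswap : ∀ o o' : Option (Fin m),
      optSet (m := m) o ∪ (optSet o' ∪ A) = optSet o' ∪ (optSet o ∪ A) :=
    fun o o' => Finset.union_left_comm _ _ _
  have hrel_symm : ∀ o o', rel o o' → rel o' o := by
    intro o o' h
    simp only [hreldef] at h ⊢
    rw [hswap o' o]; exact h
  have hrefl : ∀ o ∈ U, rel o o := by
    intro o ho
    simp only [hreldef]
    have : optSet (m := m) o ∪ (optSet o ∪ A) = optSet o ∪ A := by
      rw [← Finset.union_assoc, Finset.union_self]
    rw [this]
    exact (hUmem o).mp ho
  have htrans : ∀ o o' o'', o' ∈ U → o'' ∈ U → rel o o' → rel o' o'' → rel o o'' := by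
    intro o o' o'' ho' ho'' h1 h2
    simp only [hreldef] at h1 h2 ⊢
    -- rk (o ∪ (o' ∪ A)) = r+1 = rk (o' ∪ A), so adding o to any superset of o'∪A keeps rank
    have e1 : matFinRank M (optSet o ∪ (optSet o' ∪ (optSet o'' ∪ A)))
        = matFinRank M (optSet o' ∪ (optSet o'' ∪ A)) := by
      refine rank_optUnion_flat (A := optSet o' ∪ A) hE ?_ ?_
      · exact Finset.union_subset_union_right Finset.subset_union_right
      · rw [h1, (hUmem o').mp ho']
    have e2 : matFinRank M (optSet o' ∪ (optSet o ∪ (optSet o'' ∪ A)))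
        = matFinRank M (optSet o ∪ (optSet o'' ∪ A)) := by
      refine rank_optUnion_flat (A := optSet o'' ∪ A) hE ?_ ?_
      · exact Finset.subset_union_right
      · rw [h2, (hUmem o'').mp ho'']
    have e3 : optSet (m := m) o ∪ (optSet o' ∪ (optSet o'' ∪ A))
        = optSet o' ∪ (optSet o ∪ (optSet o'' ∪ A)) := Finset.union_left_comm _ _ _
    rw [← e2, ← e3, e1, h2]
  -- real-valued helpers
  set c : Option (Fin m) → ℝ := fun o => if o ∈ U then 1 else 0 with hc
  set p : Option (Fin m) → Option (Fin m) → ℝ :=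
    fun o o' => if o ∈ U ∧ o' ∈ U ∧ rel o o' then 1 else 0 with hp
  have hdec : ∀ o o', ((matFinRank M (optSet o ∪ (optSet o' ∪ A)) : ℕ) : ℝ)
      = (r : ℝ) + c o + c o' - p o o' := by
    intro o o'
    by_cases ho : o ∈ U
    · by_cases ho' : o' ∈ U
      · have hub : matFinRank M (optSet o ∪ (optSet o' ∪ A)) ≤ r + 2 := by
          have := rank_optUnion_le (M := M) o (optSet o' ∪ A)
          rw [(hUmem o').mp ho'] at this
          omega
        have hlb : r + 1 ≤ matFinRank M (optSet o ∪ (optSet o' ∪ A)) := by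
          have hmono : matFinRank M (optSet o ∪ A)
              ≤ matFinRank M (optSet o ∪ (optSet o' ∪ A)) :=
            rank_mono (Finset.union_subset_union_right Finset.subset_union_right)
          rw [(hUmem o).mp ho] at hmono
          exact hmono
        by_cases hrel : rel o o'
        · have : matFinRank M (optSet o ∪ (optSet o' ∪ A)) = r + 1 := hrel
          rw [this, hc, hp]
          simp only [if_pos ho, if_pos ho', if_pos (⟨ho, ho', hrel⟩ : _ ∧ _ ∧ _)]
          push_cast; ring
        · have hne : matFinRank M (optSet o ∪ (optSet o' ∪ A)) ≠ r + 1 := hrel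
          have : matFinRank M (optSet o ∪ (optSet o' ∪ A)) = r + 2 := by omega
          rw [this, hc, hp]
          simp only [if_pos ho, if_pos ho',
            if_neg (fun h : _ ∧ _ ∧ _ => hrel h.2.2)]
          push_cast; ring
      · have : matFinRank M (optSet o ∪ (optSet o' ∪ A)) = matFinRank M (optSet o ∪ A) := by
          rw [hswap o o']
          exact hflat o' o ho'
        rw [this, (hUmem o).mp ho, hc, hp]
        simp only [if_pos ho, if_neg ho',
          if_neg (fun h : _ ∧ _ ∧ _ => ho' h.2.1)]
        push_cast; ring
    · have : matFinRank M (optSet o ∪ (optSet o' ∪ A)) = matFinRank M (optSet o' ∪ A) :=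
        hflat o o' ho
      rw [this, hc, hp]
      have hco' : ((matFinRank M (optSet o' ∪ A) : ℕ) : ℝ)
          = (r : ℝ) + (if o' ∈ U then (1:ℝ) else 0) := by
        by_cases ho' : o' ∈ U
        · rw [(hUmem o').mp ho', if_pos ho']; push_cast; ring
        · rw [hUnot o' ho', if_neg ho']; push_cast; ring
      rw [hco']
      simp only [if_neg ho, if_neg (fun h : _ ∧ _ ∧ _ => ho h.1)]
      ring
  have key : ∑ o, ∑ o', δ o * δ o' * ((matFinRank M (optSet o ∪ (optSet o' ∪ A)) : ℕ) : ℝ)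
      = (∑ o, ∑ o', δ o * δ o' * ((r:ℝ) + c o + c o'))
        - ∑ o, ∑ o', δ o * δ o' * p o o' := by
    rw [← Finset.sum_sub_distrib]
    refine Finset.sum_congr rfl fun o _ => ?_
    rw [← Finset.sum_sub_distrib]
    refine Finset.sum_congr rfl fun o' _ => ?_
    rw [hdec o o']; ring
  have first : ∑ o, ∑ o', δ o * δ o' * ((r:ℝ) + c o + c o') = 0 := by
    have inner : ∀ o : Option (Fin m), ∑ o', δ o * δ o' * ((r:ℝ) + c o + c o')
        = δ o * (∑ o', δ o' * c o') := by
      intro o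
      have he : ∀ o' : Option (Fin m), δ o * δ o' * ((r:ℝ) + c o + c o')
          = (δ o * ((r:ℝ) + c o)) * δ o' + δ o * (δ o' * c o') := fun o' => by ring
      rw [Finset.sum_congr rfl fun o' _ => he o']
      rw [Finset.sum_add_distrib, ← Finset.mul_sum, ← Finset.mul_sum, hδ]
      ring
    rw [Finset.sum_congr rfl fun o _ => inner o, ← Finset.sum_mul, hδ, zero_mul]
  have hpnn : 0 ≤ ∑ o, ∑ o', δ o * δ o' * p o o' := by
    set cls : Option (Fin m) → Finset (Option (Fin m)) :=
      fun o => U.filter (fun w => rel w o) with hcls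
    have hcls_sub : ∀ o, cls o ⊆ U := fun o => Finset.filter_subset _ _
    have hmem_cls : ∀ w o, w ∈ cls o ↔ w ∈ U ∧ rel w o := by
      intro w o; simp [hcls]
    have hclsiff : ∀ o ∈ U, ∀ o' ∈ U, (cls o = cls o' ↔ rel o o') := by
      intro o ho o' ho'
      constructor
      · intro h
        have : o ∈ cls o' := h ▸ ((hmem_cls o o).mpr ⟨ho, hrefl o ho⟩)
        exact ((hmem_cls o o').mp this).2
      · intro h
        ext w
        rw [hmem_cls, hmem_cls]
        constructor
        · rintro ⟨hwU, hwo⟩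
          exact ⟨hwU, htrans w o o' ho ho' hwo h⟩
        · rintro ⟨hwU, hwo'⟩
          exact ⟨hwU, htrans w o' o ho' ho hwo' (hrel_symm _ _ h)⟩
    have hres : ∑ o, ∑ o', δ o * δ o' * p o o'
        = ∑ o ∈ U, ∑ o' ∈ U, δ o * δ o' * p o o' := by
      rw [← Finset.sum_subset (Finset.subset_univ U) (fun o _ ho => Finset.sum_eq_zero
        (fun o' _ => by
          simp only [hp, if_neg (fun h : _ ∧ _ ∧ _ => ho h.1), mul_zero]))]
      refine Finset.sum_congr rfl fun o ho => ?_
      rw [← Finset.sum_subset (Finset.subset_univ U) (fun o' _ ho' => by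
          simp only [hp, if_neg (fun h : _ ∧ _ ∧ _ => ho' h.2.1), mul_zero])]
    have hinner : ∀ o ∈ U, ∑ o' ∈ U, δ o * δ o' * p o o'
        = δ o * ∑ w ∈ cls o, δ w := by
      intro o ho
      have he : ∀ o' ∈ U, δ o * δ o' * p o o'
          = if o' ∈ cls o then δ o * δ o' else 0 := by
        intro o' ho'
        by_cases hr' : o' ∈ cls o
        · simp only [hp]
          rw [if_pos hr',
            if_pos (⟨ho, ho', hrel_symm _ _ ((hmem_cls o' o).mp hr').2⟩ : _ ∧ _ ∧ _),
            mul_one]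
        · have : ¬ rel o o' := fun h => hr' ((hmem_cls o' o).mpr ⟨ho', hrel_symm _ _ h⟩)
          simp only [hp]
          rw [if_neg hr', if_neg (fun h : _ ∧ _ ∧ _ => this h.2.2), mul_zero]
      rw [Finset.sum_congr rfl he, Finset.sum_ite_mem, Finset.mul_sum]
      congr 1
      exact Finset.inter_eq_right.mpr (hcls_sub o)
    rw [hres, Finset.sum_congr rfl hinner]
    rw [← Finset.sum_fiberwise_of_maps_to (g := cls) (t := U.image cls)
      (fun o ho => Finset.mem_image_of_mem cls ho)]
    refine Finset.sum_nonneg fun C hC => ?_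
    obtain ⟨o₀, ho₀, rfl⟩ := Finset.mem_image.mp hC
    have hfe : U.filter (fun o => cls o = cls o₀) = cls o₀ := by
      ext w
      rw [Finset.mem_filter, hmem_cls]
      constructor
      · rintro ⟨hwU, hwc⟩
        exact ⟨hwU, (hclsiff w hwU o₀ ho₀).mp hwc⟩
      · rintro ⟨hwU, hwr⟩
        exact ⟨hwU, (hclsiff w hwU o₀ ho₀).mpr hwr⟩
    rw [hfe]
    have : ∀ o ∈ cls o₀, δ o * ∑ w ∈ cls o, δ w = δ o * ∑ w ∈ cls o₀, δ w := by
      intro o hoc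
      have hoU : o ∈ U := hcls_sub o₀ hoc
      rw [(hclsiff o hoU o₀ ho₀).mpr ((hmem_cls o o₀).mp hoc).2]
    rw [Finset.sum_congr rfl this, ← Finset.sum_mul]
    exact mul_self_nonneg _
  rw [key, first]
  linarith

end MRS

namespace MRS
variable {m : ℕ}

noncomputable def TT {m : ℕ} (v : Finset (Fin m) → ℝ) :
    (t : ℕ) → (Fin t → Option (Fin m) → ℝ) → Finset (Fin m) → ℝ :=
  fun t W B => ∑ f : Fin t → Option (Fin m),
    (∏ s, W s (f s)) * v (B ∪ Finset.univ.biUnion (fun s => optSet (f s)))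

lemma biUnion_succAbove {γ : Type*} [DecidableEq γ] {t : ℕ}
    (F : Fin (t + 1) → Finset γ) (i : Fin (t + 1)) :
    Finset.univ.biUnion F = F i ∪ Finset.univ.biUnion (fun s : Fin t => F (i.succAbove s)) := by
  ext x
  simp only [Finset.mem_biUnion, Finset.mem_union, Finset.mem_univ, true_and]
  constructor
  · rintro ⟨s, hs⟩
    by_cases h : s = i
    · exact Or.inl (h ▸ hs)
    · obtain ⟨z, rfl⟩ := Fin.exists_succAbove_eq h
      exact Or.inr ⟨z, hs⟩
  · rintro (h | ⟨z, hz⟩)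
    · exact ⟨i, h⟩
    · exact ⟨i.succAbove z, hz⟩

lemma TT_peel (v : Finset (Fin m) → ℝ) (t : ℕ) (W : Fin (t + 1) → Option (Fin m) → ℝ)
    (B : Finset (Fin m)) (i : Fin (t + 1)) :
    TT v (t + 1) W B
      = ∑ o : Option (Fin m), W i o * TT v t (fun s => W (i.succAbove s)) (B ∪ optSet o) := by
  rw [TT]
  rw [← Equiv.sum_comp (Fin.insertNthEquiv (fun _ => Option (Fin m)) i)]
  rw [Fintype.sum_prod_type]
  refine Finset.sum_congr rfl fun o _ => ?_
  rw [TT, Finset.mul_sum]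
  refine Finset.sum_congr rfl fun g _ => ?_
  have happ_same : (Fin.insertNthEquiv (fun _ => Option (Fin m)) i) (o, g) i = o := by
    simp [Fin.insertNthEquiv]
  have happ_above : ∀ s, (Fin.insertNthEquiv (fun _ => Option (Fin m)) i) (o, g) (i.succAbove s)
      = g s := by
    intro s; simp [Fin.insertNthEquiv]
  rw [Fin.prod_univ_succAbove (fun s => W s ((Fin.insertNthEquiv (fun _ => Option (Fin m)) i) (o, g) s)) i]
  rw [biUnion_succAbove (fun s => optSet ((Fin.insertNthEquiv (fun _ => Option (Fin m)) i) (o, g) s)) i]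
  simp only [happ_same, happ_above]
  rw [Finset.union_assoc]
  ring

lemma TT_perm (v : Finset (Fin m) → ℝ) (t : ℕ) (W : Fin t → Option (Fin m) → ℝ)
    (B : Finset (Fin m)) (σ : Equiv.Perm (Fin t)) :
    TT v t (fun s => W (σ s)) B = TT v t W B := by
  rw [TT, TT]
  rw [← Equiv.sum_comp (Equiv.arrowCongr σ (Equiv.refl (Option (Fin m))))
    (fun f : Fin t → Option (Fin m) =>
      (∏ s, W s (f s)) * v (B ∪ Finset.univ.biUnion (fun s => optSet (f s))))]
  refine Finset.sum_congr rfl fun f _ => ?_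
  have happ : ∀ s, (Equiv.arrowCongr σ (Equiv.refl (Option (Fin m)))) f s = f (σ.symm s) := by
    intro s; simp [Equiv.arrowCongr]
  simp only [happ]
  have h1 : ∏ s, W s (f (σ.symm s)) = ∏ s, W (σ s) (f s) := by
    rw [← Equiv.prod_comp σ (fun s => W s (f (σ.symm s)))]
    simp
  have h2 : Finset.univ.biUnion (fun s => optSet (f (σ.symm s)))
      = Finset.univ.biUnion (fun s => optSet (f s)) := by
    ext x
    simp only [Finset.mem_biUnion, Finset.mem_univ, true_and]
    constructor
    · rintro ⟨s, hs⟩; exact ⟨σ.symm s, hs⟩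
    · rintro ⟨s, hs⟩; exact ⟨σ s, by simpa using hs⟩
  rw [h1, h2]

end MRS

namespace MRS
variable {m : ℕ}

def Wof {m t : ℕ} (wx wy : Option (Fin m) → ℝ) (S : Finset (Fin t)) :
    Fin t → Option (Fin m) → ℝ := fun s => if s ∈ S then wx else wy

lemma exists_perm_finset {t : ℕ} {S S' : Finset (Fin t)} (h : S.card = S'.card) :
    ∃ σ : Equiv.Perm (Fin t), ∀ s, σ s ∈ S ↔ s ∈ S' := by
  classical
  have h1 : Fintype.card {x : Fin t // x ∈ S'} = Fintype.card {x : Fin t // x ∈ S} := by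
    simp only [Fintype.card_coe]; omega
  have h2 : Fintype.card {x : Fin t // ¬ x ∈ S'} = Fintype.card {x : Fin t // ¬ x ∈ S} := by
    rw [Fintype.card_subtype_compl, Fintype.card_subtype_compl]
    simp only [Fintype.card_coe]; omega
  set e1 := Fintype.equivOfCardEq h1
  set e2 := Fintype.equivOfCardEq h2
  refine ⟨Equiv.subtypeCongr e1 e2, fun s => ?_⟩
  by_cases hs : s ∈ S'
  · rw [iff_true_intro hs, iff_true]
    have : Equiv.subtypeCongr e1 e2 s = ↑(e1 ⟨s, hs⟩) := by
      simp [Equiv.subtypeCongr, hs]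
    rw [this]
    exact (e1 ⟨s, hs⟩).2
  · rw [iff_false_intro hs, iff_false]
    have : Equiv.subtypeCongr e1 e2 s = ↑(e2 ⟨s, hs⟩) := by
      simp [Equiv.subtypeCongr, hs]
    rw [this]
    exact (e2 ⟨s, hs⟩).2

lemma TT_Wof_card (v : Finset (Fin m) → ℝ) {t : ℕ} (wx wy : Option (Fin m) → ℝ)
    {S S' : Finset (Fin t)} (h : S.card = S'.card) (B : Finset (Fin m)) :
    TT v t (Wof wx wy S) B = TT v t (Wof wx wy S') B := by
  obtain ⟨σ, hσ⟩ := exists_perm_finset h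
  have : (fun s => Wof wx wy S (σ s)) = Wof wx wy S' := by
    funext s
    rw [Wof, Wof]
    by_cases hs : s ∈ S'
    · rw [if_pos ((hσ s).mpr hs), if_pos hs]
    · rw [if_neg (fun hc => hs ((hσ s).mp hc)), if_neg hs]
  rw [← this, TT_perm]

lemma TT_expand (v : Finset (Fin m) → ℝ) (t : ℕ) (wx wy : Option (Fin m) → ℝ)
    (a b : ℝ) (B : Finset (Fin m)) :
    TT v t (fun _ o => a * wx o + b * wy o) B
      = ∑ S ∈ (Finset.univ : Finset (Fin t)).powerset,
          a ^ S.card * b ^ (t - S.card) * TT v t (Wof wx wy S) B := by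
  classical
  rw [TT]
  have hf : ∀ f : Fin t → Option (Fin m), ∏ s, (a * wx (f s) + b * wy (f s))
      = ∑ S ∈ (Finset.univ : Finset (Fin t)).powerset,
          a ^ S.card * b ^ (t - S.card) * ∏ s, Wof wx wy S s (f s) := by
    intro f
    rw [Finset.prod_add]
    refine Finset.sum_congr rfl fun S hS => ?_
    have hsub : S ⊆ Finset.univ := Finset.mem_powerset.mp hS
    have h1 : ∏ s ∈ S, (a * wx (f s)) = a ^ S.card * ∏ s ∈ S, wx (f s) := by
      rw [Finset.prod_mul_distrib, Finset.prod_const]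
    have h2 : ∏ s ∈ Finset.univ \ S, (b * wy (f s))
        = b ^ (t - S.card) * ∏ s ∈ Finset.univ \ S, wy (f s) := by
      rw [Finset.prod_mul_distrib, Finset.prod_const, Finset.card_sdiff_of_subset hsub]
      simp
    have h3 : ∏ s, Wof wx wy S s (f s)
        = (∏ s ∈ S, wx (f s)) * ∏ s ∈ Finset.univ \ S, wy (f s) := by
      have hpt : ∀ s : Fin t, Wof wx wy S s (f s)
          = if s ∈ S then wx (f s) else wy (f s) := by
        intro s; simp only [Wof]; split_ifs <;> rfl
      rw [Finset.prod_congr rfl (fun s _ => hpt s), Finset.prod_ite _ _]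
      congr 1
      · congr 1; ext s; simp
      · congr 1; ext s; simp [Finset.mem_sdiff]
    rw [h1, h2, h3]; ring
  rw [Finset.sum_congr rfl fun f _ => by rw [hf f, Finset.sum_mul]]
  rw [Finset.sum_comm]
  refine Finset.sum_congr rfl fun S _ => ?_
  rw [TT, Finset.mul_sum]
  refine Finset.sum_congr rfl fun f _ => by ring

lemma sum_pow_one {ι : Type*} [DecidableEq ι] (u : Finset ι) (a b : ℝ) (hab : a + b = 1) :
    ∑ S ∈ u.powerset, a ^ S.card * b ^ (u.card - S.card) = 1 := by
  induction u using Finset.induction_on with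
  | empty => simp
  | insert x s hx ih =>
    rw [Finset.sum_powerset_insert hx]
    have e1 : ∀ T ∈ s.powerset, a ^ T.card * b ^ ((insert x s).card - T.card)
        = b * (a ^ T.card * b ^ (s.card - T.card)) := by
      intro T hT
      have hTs : T.card ≤ s.card := Finset.card_le_card (Finset.mem_powerset.mp hT)
      rw [Finset.card_insert_of_notMem hx, Nat.succ_sub hTs, pow_succ]
      ring
    have e2 : ∀ T ∈ s.powerset, a ^ (insert x T).card * b ^ ((insert x s).card - (insert x T).card)
        = a * (a ^ T.card * b ^ (s.card - T.card)) := by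
      intro T hT
      have hxT : x ∉ T := fun hc => hx (Finset.mem_powerset.mp hT hc)
      rw [Finset.card_insert_of_notMem hx, Finset.card_insert_of_notMem hxT,
        Nat.succ_sub_succ, pow_succ]
      ring
    rw [Finset.sum_congr rfl e1, Finset.sum_congr rfl e2, ← Finset.mul_sum, ← Finset.mul_sum,
      ih]
    linarith

lemma sum_pow_card {ι : Type*} [DecidableEq ι] (u : Finset ι) (a b : ℝ) (hab : a + b = 1) :
    ∑ S ∈ u.powerset, a ^ S.card * b ^ (u.card - S.card) * (S.card : ℝ)
      = (u.card : ℝ) * a := by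
  induction u using Finset.induction_on with
  | empty => simp
  | insert x s hx ih =>
    rw [Finset.sum_powerset_insert hx]
    have e1 : ∀ T ∈ s.powerset,
        a ^ T.card * b ^ ((insert x s).card - T.card) * (T.card : ℝ)
        = b * (a ^ T.card * b ^ (s.card - T.card) * (T.card : ℝ)) := by
      intro T hT
      have hTs : T.card ≤ s.card := Finset.card_le_card (Finset.mem_powerset.mp hT)
      rw [Finset.card_insert_of_notMem hx, Nat.succ_sub hTs, pow_succ]
      ring
    have e2 : ∀ T ∈ s.powerset,
        a ^ (insert x T).card * b ^ ((insert x s).card - (insert x T).card)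
          * ((insert x T).card : ℝ)
        = a * (a ^ T.card * b ^ (s.card - T.card) * (T.card : ℝ))
          + a * (a ^ T.card * b ^ (s.card - T.card)) := by
      intro T hT
      have hxT : x ∉ T := fun hc => hx (Finset.mem_powerset.mp hT hc)
      rw [Finset.card_insert_of_notMem hx, Finset.card_insert_of_notMem hxT,
        Nat.succ_sub_succ, pow_succ]
      push_cast
      ring
    rw [Finset.sum_congr rfl e1, Finset.sum_congr rfl e2, Finset.sum_add_distrib,
      ← Finset.mul_sum, ← Finset.mul_sum, ← Finset.mul_sum, ih, sum_pow_one s a b hab]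
    rw [Finset.card_insert_of_notMem hx]
    push_cast
    linear_combination ((s.card : ℝ) * a) * hab

lemma chord (NN : ℕ → ℝ) (k : ℕ)
    (hconc : ∀ j, j + 2 ≤ k → NN (j + 2) + NN j ≤ 2 * NN (j + 1)) :
    ∀ j, j ≤ k → (j : ℝ) * NN k + ((k : ℝ) - (j : ℝ)) * NN 0 ≤ (k : ℝ) * NN j := by
  have hmono : ∀ i i', i ≤ i' → i' + 1 ≤ k →
      NN (i' + 1) - NN i' ≤ NN (i + 1) - NN i := by
    intro i i' hle
    induction i', hle using Nat.le_induction with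
    | base => intro _; exact le_refl _
    | succ i'' hle' ih =>
      intro hk'
      have h1 := hconc i'' (by omega)
      have h2 := ih (by omega)
      have e1 : NN (i'' + 1 + 1) = NN (i'' + 2) := by norm_num
      linarith
  intro j hj
  rcases eq_or_lt_of_le hj with rfl | hjk
  · have : (j : ℝ) - (j : ℝ) = 0 := by ring
    rw [this, zero_mul, add_zero]
  · have htelj : NN j - NN 0 = ∑ i ∈ Finset.range j, (NN (i + 1) - NN i) :=
      (Finset.sum_range_sub NN j).symm
    have htelk : NN k - NN j = ∑ i ∈ Finset.Ico j k, (NN (i + 1) - NN i) := by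
      rw [Finset.sum_Ico_eq_sub _ hj, Finset.sum_range_sub NN k, Finset.sum_range_sub NN j]
      ring
    set d : ℝ := NN (j + 1) - NN j with hd
    have hb1 : (j : ℝ) * d ≤ NN j - NN 0 := by
      rw [htelj]
      have : ∀ i ∈ Finset.range j, d ≤ NN (i + 1) - NN i := by
        intro i hi
        exact hmono i j (le_of_lt (Finset.mem_range.mp hi)) (by omega)
      calc (j : ℝ) * d = (Finset.range j).card • d := by
            rw [Finset.card_range, nsmul_eq_mul]
        _ ≤ ∑ i ∈ Finset.range j, (NN (i + 1) - NN i) := Finset.card_nsmul_le_sum _ _ _ this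
    have hb2 : NN k - NN j ≤ ((k : ℝ) - (j : ℝ)) * d := by
      rw [htelk]
      have : ∀ i ∈ Finset.Ico j k, NN (i + 1) - NN i ≤ d := by
        intro i hi
        rw [Finset.mem_Ico] at hi
        exact hmono j i hi.1 (by omega)
      calc ∑ i ∈ Finset.Ico j k, (NN (i + 1) - NN i)
          ≤ (Finset.Ico j k).card • d := Finset.sum_le_card_nsmul _ _ _ this
        _ = ((k : ℝ) - (j : ℝ)) * d := by
            rw [Nat.card_Ico, nsmul_eq_mul]
            rw [Nat.cast_sub hj]
    have hj0 : (0 : ℝ) ≤ (j : ℝ) := Nat.cast_nonneg j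
    have hkj0 : (0 : ℝ) ≤ (k : ℝ) - (j : ℝ) := by
      have : (j : ℝ) ≤ (k : ℝ) := Nat.cast_le.mpr hj
      linarith
    have p1 : (j : ℝ) * (NN k - NN j) ≤ (j : ℝ) * (((k : ℝ) - (j : ℝ)) * d) :=
      mul_le_mul_of_nonneg_left hb2 hj0
    have p2 : ((k : ℝ) - (j : ℝ)) * ((j : ℝ) * d) ≤ ((k : ℝ) - (j : ℝ)) * (NN j - NN 0) :=
      mul_le_mul_of_nonneg_left hb1 hkj0
    nlinarith [p1, p2]

end MRS

namespace MRS
variable {m : ℕ}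

lemma succAbove_val {n p : ℕ} (hp : p < n + 1) (s : Fin n) :
    (((⟨p, hp⟩ : Fin (n + 1))).succAbove s : ℕ) = if (s : ℕ) < p then (s : ℕ) else (s : ℕ) + 1 := by
  rw [Fin.succAbove]
  by_cases h : (s : ℕ) < p
  · rw [if_pos h, if_pos]
    · rfl
    · rw [Fin.lt_def]; exact h
  · rw [if_neg h, if_neg]
    · rfl
    · rw [Fin.lt_def]; exact h

lemma Wof_succAbove_le {wx wy : Option (Fin m) → ℝ} {n p c : ℕ} (hp : p < n + 1) (hc : c ≤ p) :
    (fun s : Fin n => Wof wx wy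
        (Finset.univ.filter (fun u : Fin (n + 1) => (u : ℕ) < c))
        ((⟨p, hp⟩ : Fin (n + 1)).succAbove s))
      = Wof wx wy (Finset.univ.filter (fun u : Fin n => (u : ℕ) < c)) := by
  funext s
  simp only [Wof, Finset.mem_filter, Finset.mem_univ, true_and]
  have hv := succAbove_val hp s
  by_cases h : (s : ℕ) < p
  · rw [hv, if_pos h]
  · rw [hv, if_neg h]
    have h1 : ¬ ((s : ℕ) + 1 < c) := by omega
    have h2 : ¬ ((s : ℕ) < c) := by omega
    rw [if_neg h1, if_neg h2]

lemma Wof_succAbove_eq {wx wy : Option (Fin m) → ℝ} {n p : ℕ} (hp : p < n + 1) :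
    (fun s : Fin n => Wof wx wy
        (Finset.univ.filter (fun u : Fin (n + 1) => (u : ℕ) < p + 1))
        ((⟨p, hp⟩ : Fin (n + 1)).succAbove s))
      = Wof wx wy (Finset.univ.filter (fun u : Fin n => (u : ℕ) < p)) := by
  funext s
  simp only [Wof, Finset.mem_filter, Finset.mem_univ, true_and]
  have hv := succAbove_val hp s
  by_cases h : (s : ℕ) < p
  · rw [hv, if_pos h, if_pos (by omega : (s:ℕ) < p + 1), if_pos h]
  · rw [hv, if_neg h, if_neg (by omega : ¬ ((s:ℕ) + 1 < p + 1)), if_neg h]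

lemma Wof_at {wx wy : Option (Fin m) → ℝ} {n c : ℕ} (u : Fin n) :
    Wof wx wy (Finset.univ.filter (fun u : Fin n => (u : ℕ) < c)) u
      = if (u : ℕ) < c then wx else wy := by
  simp only [Wof, Finset.mem_filter, Finset.mem_univ, true_and]

lemma NN_sd (v : Finset (Fin m) → ℝ)
    (hQ : ∀ (B : Finset (Fin m)) (δ : Option (Fin m) → ℝ), (∑ o, δ o) = 0 →
      ∑ o, ∑ o', δ o * δ o' * v (optSet o ∪ (optSet o' ∪ B)) ≤ 0)
    (t j : ℕ) (hj : j ≤ t) (wx wy : Option (Fin m) → ℝ)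
    (hwx : ∀ o, 0 ≤ wx o) (hwy : ∀ o, 0 ≤ wy o)
    (hsum : ∑ o, wx o = ∑ o, wy o) :
    TT v (t + 1 + 1) (Wof wx wy
        (Finset.univ.filter (fun u : Fin (t + 1 + 1) => (u : ℕ) < j + 2))) ∅
      + TT v (t + 1 + 1) (Wof wx wy
        (Finset.univ.filter (fun u : Fin (t + 1 + 1) => (u : ℕ) < j))) ∅
      ≤ 2 * TT v (t + 1 + 1) (Wof wx wy
        (Finset.univ.filter (fun u : Fin (t + 1 + 1) => (u : ℕ) < j + 1))) ∅ := by
  classical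
  set i₁ : Fin (t + 1 + 1) := ⟨j + 1, by omega⟩ with hi₁
  set i₂ : Fin (t + 1) := ⟨j, by omega⟩ with hi₂
  -- inner quantity after two peels
  set Q : Option (Fin m) → Option (Fin m) → ℝ := fun o o' =>
    TT v t (Wof wx wy (Finset.univ.filter (fun u : Fin t => (u : ℕ) < j)))
      ((∅ ∪ optSet o) ∪ optSet o') with hQdef
  -- first peels
  have peel2 : TT v (t + 1 + 1) (Wof wx wy
      (Finset.univ.filter (fun u : Fin (t + 1 + 1) => (u : ℕ) < j + 2))) ∅
      = ∑ o, wx o * ∑ o', wx o' * Q o o' := by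
    rw [TT_peel v (t + 1) _ ∅ i₁]
    refine Finset.sum_congr rfl fun o _ => ?_
    rw [hi₁]
    rw [Wof_succAbove_eq (by omega : j + 1 < t + 1 + 1)]
    rw [Wof_at]
    rw [if_pos (by omega : j + 1 < j + 1 + 1)]
    congr 1
    rw [TT_peel v t _ _ i₂, hi₂]
    refine Finset.sum_congr rfl fun o' _ => ?_
    rw [Wof_succAbove_eq (by omega : j < t + 1)]
    rw [Wof_at, if_pos (by omega : j < j + 1)]
  have peel1 : TT v (t + 1 + 1) (Wof wx wy
      (Finset.univ.filter (fun u : Fin (t + 1 + 1) => (u : ℕ) < j + 1))) ∅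
      = ∑ o, wy o * ∑ o', wx o' * Q o o' := by
    rw [TT_peel v (t + 1) _ ∅ i₁]
    refine Finset.sum_congr rfl fun o _ => ?_
    rw [hi₁]
    rw [Wof_succAbove_le (by omega : j + 1 < t + 1 + 1) (le_refl (j + 1))]
    rw [Wof_at, if_neg (by omega : ¬ (j + 1 < j + 1))]
    congr 1
    rw [TT_peel v t _ _ i₂, hi₂]
    refine Finset.sum_congr rfl fun o' _ => ?_
    rw [Wof_succAbove_eq (by omega : j < t + 1)]
    rw [Wof_at, if_pos (by omega : j < j + 1)]
  have peel0 : TT v (t + 1 + 1) (Wof wx wy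
      (Finset.univ.filter (fun u : Fin (t + 1 + 1) => (u : ℕ) < j))) ∅
      = ∑ o, wy o * ∑ o', wy o' * Q o o' := by
    rw [TT_peel v (t + 1) _ ∅ i₁]
    refine Finset.sum_congr rfl fun o _ => ?_
    rw [hi₁]
    rw [Wof_succAbove_le (by omega : j + 1 < t + 1 + 1) (by omega : j ≤ j + 1)]
    rw [Wof_at, if_neg (by omega : ¬ (j + 1 < j))]
    congr 1
    rw [TT_peel v t _ _ i₂, hi₂]
    refine Finset.sum_congr rfl fun o' _ => ?_
    rw [Wof_succAbove_le (by omega : j < t + 1) (le_refl j)]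
    rw [Wof_at, if_neg (by omega : ¬ (j < j))]
  -- symmetry of Q
  have hQsymm : ∀ o o', Q o o' = Q o' o := by
    intro o o'
    simp only [hQdef]
    congr 1
    rw [Finset.union_right_comm]
  -- the difference identity
  set δ : Option (Fin m) → ℝ := fun o => wx o - wy o with hδdef
  have hδ : ∑ o, δ o = 0 := by
    simp only [hδdef]
    rw [Finset.sum_sub_distrib, hsum, sub_self]
  have hswap : ∑ o, ∑ o', wx o * (wy o' * Q o o') = ∑ o, ∑ o', wy o * (wx o' * Q o o') := by
    rw [Finset.sum_comm]
    refine Finset.sum_congr rfl fun o _ => Finset.sum_congr rfl fun o' _ => ?_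
    rw [hQsymm o' o]; ring
  have dadd : ∀ F G : Option (Fin m) → Option (Fin m) → ℝ,
      ∑ o, ∑ o', (F o o' + G o o') = (∑ o, ∑ o', F o o') + ∑ o, ∑ o', G o o' := by
    intro F G
    rw [← Finset.sum_add_distrib]
    exact Finset.sum_congr rfl fun o _ => Finset.sum_add_distrib
  have dsub : ∀ F G : Option (Fin m) → Option (Fin m) → ℝ,
      ∑ o, ∑ o', (F o o' - G o o') = (∑ o, ∑ o', F o o') - ∑ o, ∑ o', G o o' := by
    intro F G
    rw [← Finset.sum_sub_distrib]
    exact Finset.sum_congr rfl fun o _ => Finset.sum_sub_distrib _ _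
  have expand : ∀ W1 W2 : Option (Fin m) → ℝ,
      ∑ o, W1 o * ∑ o', W2 o' * Q o o' = ∑ o, ∑ o', W1 o * (W2 o' * Q o o') :=
    fun W1 W2 => Finset.sum_congr rfl (fun o _ => Finset.mul_sum _ _ _)
  have combine : ∑ o, ∑ o', δ o * δ o' * Q o o'
      = ((∑ o, ∑ o', wx o * (wx o' * Q o o')) + ∑ o, ∑ o', wy o * (wy o' * Q o o'))
        - ((∑ o, ∑ o', wy o * (wx o' * Q o o')) + ∑ o, ∑ o', wx o * (wy o' * Q o o')) := by
    rw [← dadd, ← dadd, ← dsub]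
    refine Finset.sum_congr rfl fun o _ => Finset.sum_congr rfl fun o' _ => ?_
    simp only [hδdef]; ring
  have hdiff : TT v (t + 1 + 1) (Wof wx wy
        (Finset.univ.filter (fun u : Fin (t + 1 + 1) => (u : ℕ) < j + 2))) ∅
      + TT v (t + 1 + 1) (Wof wx wy
        (Finset.univ.filter (fun u : Fin (t + 1 + 1) => (u : ℕ) < j))) ∅
      - 2 * TT v (t + 1 + 1) (Wof wx wy
        (Finset.univ.filter (fun u : Fin (t + 1 + 1) => (u : ℕ) < j + 1))) ∅
      = ∑ o, ∑ o', δ o * δ o' * Q o o' := by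
    rw [peel2, peel1, peel0, expand wx wx, expand wy wy, expand wy wx, combine]
    linarith [hswap]
  -- nonpositivity of the quadratic form
  have hQle : ∑ o, ∑ o', δ o * δ o' * Q o o' ≤ 0 := by
    have hQexp : ∀ o o', Q o o' = ∑ g : Fin t → Option (Fin m),
        (∏ s, Wof wx wy (Finset.univ.filter (fun u : Fin t => (u : ℕ) < j)) s (g s))
          * v (optSet o ∪ (optSet o'
              ∪ Finset.univ.biUnion (fun s => optSet (g s)))) := by
      intro o o'
      simp only [hQdef]
      rw [TT]
      refine Finset.sum_congr rfl fun g _ => ?_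
      have hBe : ((∅ ∪ optSet o) ∪ optSet o')
          ∪ Finset.univ.biUnion (fun s : Fin t => optSet (g s))
          = optSet o ∪ (optSet o' ∪ Finset.univ.biUnion (fun s : Fin t => optSet (g s))) := by
        ext x
        simp only [Finset.mem_union, Finset.notMem_empty, false_or]
        tauto
      rw [hBe]
    have step1 : ∑ o, ∑ o', δ o * δ o' * Q o o'
        = ∑ g : Fin t → Option (Fin m),
            (∏ s, Wof wx wy (Finset.univ.filter (fun u : Fin t => (u : ℕ) < j)) s (g s))
              * ∑ o, ∑ o', δ o * δ o'
                * v (optSet o ∪ (optSet o'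
                    ∪ Finset.univ.biUnion (fun s => optSet (g s)))) := by
      rw [Finset.sum_congr rfl fun o (_ : o ∈ Finset.univ) =>
        Finset.sum_congr rfl fun o' (_ : o' ∈ Finset.univ) => by
          rw [hQexp o o', Finset.mul_sum]]
      rw [Finset.sum_congr rfl fun o (_ : o ∈ Finset.univ) => Finset.sum_comm]
      rw [Finset.sum_comm]
      refine Finset.sum_congr rfl fun g _ => ?_
      rw [Finset.mul_sum]
      refine Finset.sum_congr rfl fun o _ => ?_
      rw [Finset.mul_sum]
      refine Finset.sum_congr rfl fun o' _ => by ring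
    rw [step1]
    refine Finset.sum_nonpos fun g _ => ?_
    have hcoef : 0 ≤ ∏ s, Wof wx wy (Finset.univ.filter (fun u : Fin t => (u : ℕ) < j)) s (g s) := by
      refine Finset.prod_nonneg fun s _ => ?_
      simp only [Wof]
      split_ifs
      · exact hwx _
      · exact hwy _
    have hqform := hQ (Finset.univ.biUnion (fun s => optSet (g s))) δ hδ
    exact mul_nonpos_iff.mpr (Or.inl ⟨hcoef, hqform⟩)
  linarith [hdiff, hQle]

end MRS

namespace MRS
variable {m : ℕ}

lemma filter_lt_card {k j : ℕ} (hj : j ≤ k) :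
    (Finset.univ.filter (fun u : Fin k => (u : ℕ) < j)).card = j := by
  induction j with
  | zero => simp
  | succ n ih =>
    have hn : n ≤ k := by omega
    have hstep : Finset.univ.filter (fun u : Fin k => (u : ℕ) < n + 1)
        = insert (⟨n, by omega⟩ : Fin k)
            (Finset.univ.filter (fun u : Fin k => (u : ℕ) < n)) := by
      ext u
      simp only [Finset.mem_filter, Finset.mem_univ, true_and, Finset.mem_insert]
      constructor
      · intro h
        by_cases hu : (u : ℕ) = n
        · left; exact Fin.ext hu
        · right; omega
      · rintro (rfl | h)
        · simp
        · omega
    rw [hstep, Finset.card_insert_of_notMem (by simp), ih hn]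

lemma Wof_univ {k : ℕ} (wx wy : Option (Fin m) → ℝ) :
    Wof (t := k) wx wy Finset.univ = fun _ => wx := by
  funext s; simp [Wof]

lemma Wof_empty {k : ℕ} (wx wy : Option (Fin m) → ℝ) :
    Wof (t := k) wx wy ∅ = fun _ => wy := by
  funext s; simp [Wof]

theorem TT_concave_core (v : Finset (Fin m) → ℝ)
    (hQ : ∀ (B : Finset (Fin m)) (δ : Option (Fin m) → ℝ), (∑ o, δ o) = 0 →
      ∑ o, ∑ o', δ o * δ o' * v (optSet o ∪ (optSet o' ∪ B)) ≤ 0)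
    (k : ℕ) (hk : 1 ≤ k) (wx wy : Option (Fin m) → ℝ)
    (hwx : ∀ o, 0 ≤ wx o) (hwy : ∀ o, 0 ≤ wy o)
    (hsum : ∑ o, wx o = ∑ o, wy o)
    (a b : ℝ) (ha : 0 ≤ a) (hb : 0 ≤ b) (hab : a + b = 1) :
    a * TT v k (fun _ => wx) ∅ + b * TT v k (fun _ => wy) ∅
      ≤ TT v k (fun _ o => a * wx o + b * wy o) ∅ := by
  classical
  have hconc : ∀ j, j + 2 ≤ k →
      TT v k (Wof wx wy (Finset.univ.filter (fun u : Fin k => (u : ℕ) < j + 2))) ∅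
        + TT v k (Wof wx wy (Finset.univ.filter (fun u : Fin k => (u : ℕ) < j))) ∅
      ≤ 2 * TT v k (Wof wx wy (Finset.univ.filter (fun u : Fin k => (u : ℕ) < j + 1))) ∅ := by
    intro j hjk
    obtain ⟨t, rfl⟩ : ∃ t, k = t + 1 + 1 := ⟨k - 2, by omega⟩
    exact NN_sd v hQ t j (by omega) wx wy hwx hwy hsum
  have hch := chord
    (fun j => TT v k (Wof wx wy (Finset.univ.filter (fun u : Fin k => (u : ℕ) < j))) ∅)
    k hconc
  have hc1 : TT v k (Wof wx wy (Finset.univ.filter (fun u : Fin k => (u : ℕ) < k))) ∅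
      = TT v k (fun _ => wx) ∅ := by
    have : Finset.univ.filter (fun u : Fin k => (u : ℕ) < k) = Finset.univ :=
      Finset.filter_true_of_mem (fun u _ => u.isLt)
    rw [this, Wof_univ]
  have hc2 : TT v k (Wof wx wy (Finset.univ.filter (fun u : Fin k => (u : ℕ) < 0))) ∅
      = TT v k (fun _ => wy) ∅ := by
    have : Finset.univ.filter (fun u : Fin k => (u : ℕ) < 0) = ∅ :=
      Finset.filter_false_of_mem (fun u _ => by omega)
    rw [this, Wof_empty]
  have key : ∀ S ∈ (Finset.univ : Finset (Fin k)).powerset,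
      (S.card : ℝ) * TT v k (fun _ => wx) ∅
        + ((k : ℝ) - (S.card : ℝ)) * TT v k (fun _ => wy) ∅
      ≤ (k : ℝ) * TT v k (Wof wx wy S) ∅ := by
    intro S _
    have hSk : S.card ≤ k := by
      have := Finset.card_le_univ S
      simp only [Fintype.card_fin] at this
      exact this
    have hcards : TT v k (Wof wx wy S) ∅
        = TT v k (Wof wx wy (Finset.univ.filter (fun u : Fin k => (u : ℕ) < S.card))) ∅ :=
      TT_Wof_card v wx wy (by rw [filter_lt_card hSk]) ∅
    have h0 : (S.card : ℝ) * TT v k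
          (Wof wx wy (Finset.univ.filter (fun u : Fin k => (u : ℕ) < k))) ∅
        + ((k : ℝ) - (S.card : ℝ)) * TT v k
          (Wof wx wy (Finset.univ.filter (fun u : Fin k => (u : ℕ) < 0))) ∅
        ≤ (k : ℝ) * TT v k
          (Wof wx wy (Finset.univ.filter (fun u : Fin k => (u : ℕ) < S.card))) ∅ :=
      hch S.card hSk
    rw [hc1, hc2] at h0
    rw [hcards]
    exact h0
  have hexp := TT_expand v k wx wy a b ∅
  have hI1 : ∑ S ∈ (Finset.univ : Finset (Fin k)).powerset,
      a ^ S.card * b ^ (k - S.card) = 1 := by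
    have := sum_pow_one (Finset.univ : Finset (Fin k)) a b hab
    rwa [Finset.card_univ, Fintype.card_fin] at this
  have hI2 : ∑ S ∈ (Finset.univ : Finset (Fin k)).powerset,
      a ^ S.card * b ^ (k - S.card) * (S.card : ℝ) = (k : ℝ) * a := by
    have := sum_pow_card (Finset.univ : Finset (Fin k)) a b hab
    rwa [Finset.card_univ, Fintype.card_fin] at this
  have hwnn : ∀ S : Finset (Fin k), 0 ≤ a ^ S.card * b ^ (k - S.card) :=
    fun S => mul_nonneg (pow_nonneg ha _) (pow_nonneg hb _)
  set X := TT v k (fun _ => wx) ∅ with hX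
  set Y := TT v k (fun _ => wy) ∅ with hY
  have main : (k : ℝ) * (a * X + b * Y)
      ≤ (k : ℝ) * TT v k (fun _ o => a * wx o + b * wy o) ∅ := by
    rw [hexp, Finset.mul_sum]
    have step1 : (k : ℝ) * (a * X + b * Y)
        = ∑ S ∈ (Finset.univ : Finset (Fin k)).powerset,
            a ^ S.card * b ^ (k - S.card)
              * ((S.card : ℝ) * X + ((k : ℝ) - (S.card : ℝ)) * Y) := by
      have he : ∀ S ∈ (Finset.univ : Finset (Fin k)).powerset,
          a ^ S.card * b ^ (k - S.card)
            * ((S.card : ℝ) * X + ((k : ℝ) - (S.card : ℝ)) * Y)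
          = (a ^ S.card * b ^ (k - S.card) * (S.card : ℝ)) * (X - Y)
            + (a ^ S.card * b ^ (k - S.card)) * ((k : ℝ) * Y) := by
        intro S _; ring
      rw [Finset.sum_congr rfl he, Finset.sum_add_distrib, ← Finset.sum_mul, ← Finset.sum_mul,
        hI1, hI2]
      linear_combination ((k : ℝ) * Y) * hab
    rw [step1]
    refine Finset.sum_le_sum fun S hS => ?_
    calc a ^ S.card * b ^ (k - S.card)
          * ((S.card : ℝ) * X + ((k : ℝ) - (S.card : ℝ)) * Y)
        ≤ a ^ S.card * b ^ (k - S.card) * ((k : ℝ) * TT v k (Wof wx wy S) ∅) :=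
          mul_le_mul_of_nonneg_left (key S hS) (hwnn S)
      _ = (k : ℝ) * (a ^ S.card * b ^ (k - S.card) * TT v k (Wof wx wy S) ∅) := by ring
  have hkpos : (0 : ℝ) < (k : ℝ) := by exact_mod_cast hk
  exact le_of_mul_le_mul_left main hkpos

end MRS

namespace MRS
variable {m : ℕ}

lemma mem_optSet {j : Fin m} {o : Option (Fin m)} : j ∈ optSet o ↔ o = some j := by
  cases o <;> simp [optSet, eq_comm]

lemma lotG_eq_TT (k : ℕ) (v : Finset (Fin m) → ℝ) (x : Fin m → ℝ) :
    lotG k v x = TT v k (fun _ => lotW k x) ∅ := by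
  rw [lotG, TT]
  refine Finset.sum_congr rfl fun f _ => ?_
  have h1 : lotP k k x f = ∏ s, lotW k x (f s) := rfl
  have h2 : lotProj f = ∅ ∪ Finset.univ.biUnion (fun s => optSet (f s)) := by
    ext j
    simp only [lotProj, Finset.mem_filter, Finset.mem_univ, true_and, Finset.mem_union,
      Finset.notMem_empty, false_or, Finset.mem_biUnion, mem_optSet]
  rw [h1, h2]

lemma lotW_nonneg {k : ℕ} (hk : 1 ≤ k) {x : Fin m → ℝ}
    (hx : (∀ j, 0 ≤ x j ∧ x j ≤ 1) ∧ ∑ j, x j ≤ (k : ℝ)) (o : Option (Fin m)) :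
    0 ≤ lotW k x o := by
  have hkpos : (0 : ℝ) < (k : ℝ) := by exact_mod_cast hk
  cases o with
  | some j => exact div_nonneg (hx.1 j).1 (le_of_lt hkpos)
  | none =>
    have hsnn : (∑ j, x j) / (k : ℝ) ≤ 1 := (div_le_one hkpos).mpr hx.2
    simp only [lotW]
    linarith

lemma lotW_sum {k : ℕ} (hk : 1 ≤ k) (x : Fin m → ℝ) :
    ∑ o : Option (Fin m), lotW k x o = 1 := by
  have hkpos : (0 : ℝ) < (k : ℝ) := by exact_mod_cast hk
  rw [Fintype.sum_option]
  simp only [lotW]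
  rw [← Finset.sum_div]
  ring

lemma lotW_affine {k : ℕ} (x y : Fin m → ℝ) {a b : ℝ} (hab : a + b = 1) :
    lotW k (a • x + b • y) = fun o => a * lotW k x o + b * lotW k y o := by
  funext o
  cases o with
  | some j =>
    simp only [lotW, Pi.add_apply, Pi.smul_apply, smul_eq_mul]
    ring
  | none =>
    simp only [lotW, Pi.add_apply, Pi.smul_apply, smul_eq_mul]
    rw [Finset.sum_add_distrib, ← Finset.mul_sum, ← Finset.mul_sum]
    linear_combination (-1 : ℝ) * hab
end MRS

namespace MRS
variable {m : ℕ}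

lemma lotG_concave_single {k : ℕ} (hk : 1 ≤ k) (M : Matroid (Fin m)) (hE : M.E = Set.univ)
    {x y : Fin m → ℝ}
    (hx : (∀ j, 0 ≤ x j ∧ x j ≤ 1) ∧ ∑ j, x j ≤ (k : ℝ))
    (hy : (∀ j, 0 ≤ y j ∧ y j ≤ 1) ∧ ∑ j, y j ≤ (k : ℝ))
    {a b : ℝ} (ha : 0 ≤ a) (hb : 0 ≤ b) (hab : a + b = 1) :
    a * lotG k (fun S => (matFinRank M S : ℝ)) x
      + b * lotG k (fun S => (matFinRank M S : ℝ)) y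
      ≤ lotG k (fun S => (matFinRank M S : ℝ)) (a • x + b • y) := by
  rw [lotG_eq_TT, lotG_eq_TT, lotG_eq_TT, lotW_affine x y hab]
  exact TT_concave_core (fun S => (matFinRank M S : ℝ))
    (fun B δ hδ => quad_le hE B δ hδ) k hk (lotW k x) (lotW k y)
    (lotW_nonneg hk hx) (lotW_nonneg hk hy)
    (by rw [lotW_sum hk x, lotW_sum hk y]) a b ha hb hab

lemma lotG_linear {k κ : ℕ} (M : Fin κ → Matroid (Fin m)) (w : Fin κ → ℝ)
    (v : Finset (Fin m) → ℝ)
    (hv : ∀ S, v S = ∑ ℓ, w ℓ * (matFinRank (M ℓ) S : ℝ)) (z : Fin m → ℝ) :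
    lotG k v z = ∑ ℓ, w ℓ * lotG k (fun S => (matFinRank (M ℓ) S : ℝ)) z := by
  rw [lotG]
  rw [Finset.sum_congr rfl fun f (_ : f ∈ Finset.univ) => by
    rw [hv (lotProj f), Finset.mul_sum]]
  rw [Finset.sum_comm]
  refine Finset.sum_congr rfl fun ℓ _ => ?_
  rw [lotG, Finset.mul_sum]
  exact Finset.sum_congr rfl fun f _ => by ring

end MRS


theorem stmt12 (m k : ℕ) (hm : 1 ≤ m) (hk : 1 ≤ k)
    (v : Finset (Fin m) → ℝ) (hv : IsMRS v) :
    ConcaveOn ℝ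
      {x : Fin m → ℝ | (∀ j, 0 ≤ x j ∧ x j ≤ 1) ∧ ∑ j, x j ≤ (k : ℝ)}
      (lotG k v) := by
  obtain ⟨κ, M, w, hE, hw, hvs⟩ := hv
  constructor
  · intro x hx y hy a b ha hb hab
    simp only [Set.mem_setOf_eq] at hx hy ⊢
    have happ : ∀ j, (a • x + b • y) j = a * x j + b * y j := fun j => rfl
    refine ⟨fun j => ?_, ?_⟩
    · rw [happ j]
      have h1 := hx.1 j
      have h2 := hy.1 j
      constructor
      · nlinarith [h1.1, h2.1]
      · nlinarith [h1.2, h2.2]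
    · rw [Finset.sum_congr rfl fun j _ => happ j, Finset.sum_add_distrib,
        ← Finset.mul_sum, ← Finset.mul_sum]
      nlinarith [hx.2, hy.2]
  · intro x hx y hy a b ha hb hab
    simp only [Set.mem_setOf_eq] at hx hy
    simp only [smul_eq_mul]
    rw [MRS.lotG_linear M w v hvs x, MRS.lotG_linear M w v hvs y,
      MRS.lotG_linear M w v hvs (a • x + b • y)]
    rw [Finset.mul_sum, Finset.mul_sum, ← Finset.sum_add_distrib]
    refine Finset.sum_le_sum fun ℓ _ => ?_
    have hsingle := MRS.lotG_concave_single hk (M ℓ) (hE ℓ) hx hy ha hb hab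
    calc a * (w ℓ * lotG k (fun S => (matFinRank (M ℓ) S : ℝ)) x)
          + b * (w ℓ * lotG k (fun S => (matFinRank (M ℓ) S : ℝ)) y)
        = w ℓ * (a * lotG k (fun S => (matFinRank (M ℓ) S : ℝ)) x
            + b * lotG k (fun S => (matFinRank (M ℓ) S : ℝ)) y) := by ring
      _ ≤ w ℓ * lotG k (fun S => (matFinRank (M ℓ) S : ℝ)) (a • x + b • y) :=
          mul_le_mul_of_nonneg_left hsingle (hw ℓ)
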